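/- Let R be a commutative ring, n ≥ 0, and x_1, …, x_n, t elements of R. Then for every 0 ≤ r ≤ n, the r-th elementary symmetric polynomial satisfies σ_r(x_1 + t, …, x_n + t) = Σ_{j=0}^{r} C(n − j, r − j) · σ_j(x_1, …, x_n) · t^{r−j}. -/

import Mathlib

open Finset

/-- The `r`-th elementary symmetric function of the elements `x 0, …, x (n-1)` of a
commutative ring. -/
def elemSymm {R : Type*} [CommRing R] (n : ℕ) (x : Fin n → R) (r : ℕ) : R :=
  ∑ s ∈ Finset.univ.powersetCard r, ∏ i ∈ s, x i

/-- Counting supersets of a fixed set of a given cardinality. -/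
lemma count_supersets {α : Type*} [Fintype α] [DecidableEq α] (u : Finset α) (r : ℕ)
    (hu : u.card ≤ r) :
    ((Finset.univ.powersetCard r).filter (fun s => u ⊆ s)).card
      = (Fintype.card α - u.card).choose (r - u.card) := by
  have hc : (uᶜ : Finset α).card = Fintype.card α - u.card := Finset.card_compl u
  rw [← hc, ← Finset.card_powersetCard (r - u.card) uᶜ]
  apply Finset.card_bij' (fun s _ => s \ u) (fun v _ => v ∪ u)
  · intro s hs
    simp only [Finset.mem_filter, Finset.mem_powersetCard] at hs
    obtain ⟨⟨-, hcard⟩, hus⟩ := hs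
    rw [Finset.mem_powersetCard]
    constructor
    · intro a ha
      simp only [Finset.mem_sdiff] at ha
      simp [Finset.mem_compl, ha.2]
    · rw [Finset.card_sdiff_of_subset hus, hcard]
  · intro v hv
    rw [Finset.mem_powersetCard] at hv
    obtain ⟨hvc, hvcard⟩ := hv
    have hdisj : Disjoint v u := by
      rw [Finset.disjoint_right]
      intro a hau hav
      have := hvc hav
      simp [Finset.mem_compl] at this
      exact this hau
    simp only [Finset.mem_filter, Finset.mem_powersetCard]
    refine ⟨⟨Finset.subset_univ _, ?_⟩, Finset.subset_union_right⟩
    rw [Finset.card_union_of_disjoint hdisj, hvcard, Nat.sub_add_cancel hu]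
  · intro s hs
    simp only [Finset.mem_filter] at hs
    exact Finset.sdiff_union_of_subset hs.2
  · intro v hv
    rw [Finset.mem_powersetCard] at hv
    apply Finset.union_sdiff_cancel_right
    rw [Finset.disjoint_right]
    intro a hau hav
    have := hv.1 hav
    simp [Finset.mem_compl] at this
    exact this hau

theorem stmt_6 (R : Type*) [CommRing R] (n : ℕ) (x : Fin n → R) (t : R)
    (r : ℕ) (hr : r ≤ n) :
    elemSymm n (fun i => x i + t) r =
      ∑ j ∈ Finset.range (r + 1),
        ((n - j).choose (r - j) : R) * elemSymm n x j * t ^ (r - j) := by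
  classical
  unfold elemSymm
  -- expand each product
  have step1 : ∀ s ∈ (Finset.univ : Finset (Fin n)).powersetCard r,
      ∏ i ∈ s, (x i + t)
        = ∑ u ∈ s.powerset, (∏ i ∈ u, x i) * t ^ (r - u.card) := by
    intro s hs
    rw [Finset.mem_powersetCard] at hs
    rw [Finset.prod_add]
    refine Finset.sum_congr rfl fun u hu => ?_
    rw [Finset.mem_powerset] at hu
    rw [Finset.prod_const, Finset.card_sdiff_of_subset hu, hs.2]
  rw [Finset.sum_congr rfl step1]
  -- swap the two sums
  rw [Finset.sum_comm' (t' := (Finset.univ : Finset (Fin n)).powerset)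
    (s' := fun u => (Finset.univ.powersetCard r).filter (fun s => u ⊆ s))
    (by
      intro s u
      simp only [Finset.mem_powerset, Finset.mem_filter, Finset.mem_powersetCard]
      tauto)]
  simp only [Finset.sum_const, nsmul_eq_mul]
  -- decompose powerset by cardinality
  rw [Finset.powerset_card_disjiUnion]
  erw [Finset.sum_disjiUnion]
  rw [Finset.card_univ,
    Fintype.card_fin]
  -- drop the terms with j > r
  rw [← Finset.sum_subset (Finset.range_subset_range.2 (Nat.succ_le_succ hr))
      (by
        intro j hj hjr
        rw [Finset.mem_range, Nat.lt_succ_iff, not_le] at hjr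
        apply Finset.sum_eq_zero
        intro u hu
        rw [Finset.mem_powersetCard] at hu
        have : (Finset.univ.powersetCard r).filter (fun s => u ⊆ s) = ∅ := by
          rw [Finset.filter_eq_empty_iff]
          intro s hs
          rw [Finset.mem_powersetCard] at hs
          intro hus
          have := Finset.card_le_card hus
          omega
        rw [this]
        simp)]
  refine Finset.sum_congr rfl fun j hj => ?_
  rw [Finset.mem_range, Nat.lt_succ_iff] at hj

  rw [Finset.mul_sum, Finset.sum_mul]
  refine Finset.sum_congr rfl fun u hu => ?_
  rw [Finset.mem_powersetCard] at hu
  rw [count_supersets u r (hu.2 ▸ hj), hu.2, Fintype.card_fin]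
  ring
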